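/- For all integers q ≥ r ≥ 2 and every integer m ≥ 0, ∑_{p=0}^{m} [p]_q^{-1} [m−p]_r^{-1} ≤ 6 (2r)^r [m]_r^{-1}. -/

import Mathlib

/-- `br m = max m 1`, the bracket convention `[m]` from the paper, as a real number. -/
noncomputable def br (m : ℤ) : ℝ := max (m : ℝ) 1

/-- `brf m k = [m]_k = [m]·[m-1]⋯[m-k+1]`, the modified falling factorial. -/
noncomputable def brf (m : ℤ) (k : ℕ) : ℝ := ∏ i ∈ Finset.range k, br (m - i)

lemma one_le_br (m : ℤ) : 1 ≤ br m := le_max_right _ _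

lemma br_pos (m : ℤ) : 0 < br m := lt_of_lt_of_le one_pos (one_le_br m)

lemma one_le_brf (m : ℤ) (k : ℕ) : 1 ≤ brf m k := by
  unfold brf
  induction k with
  | zero => simp
  | succ n ih =>
    rw [Finset.prod_range_succ]
    nlinarith [one_le_br (m - n)]

lemma brf_pos (m : ℤ) (k : ℕ) : 0 < brf m k := lt_of_lt_of_le one_pos (one_le_brf m k)

lemma inv_brf_le_one (m : ℤ) (k : ℕ) : (brf m k)⁻¹ ≤ 1 :=
  inv_le_one_of_one_le₀ (one_le_brf m k)

lemma brf_mono {r q : ℕ} (h : r ≤ q) (m : ℤ) : brf m r ≤ brf m q := by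
  induction q, h using Nat.le_induction with
  | base => exact le_refl _
  | succ n hn ih =>
    calc brf m r ≤ brf m n := ih
    _ ≤ brf m n * br (m - n) := le_mul_of_one_le_right (brf_pos _ _).le (one_le_br _)
    _ = brf m (n + 1) := (Finset.prod_range_succ _ _).symm

lemma inv_brf_anti {r q : ℕ} (h : r ≤ q) (m : ℤ) : (brf m q)⁻¹ ≤ (brf m r)⁻¹ :=
  inv_anti₀ (brf_pos _ _) (brf_mono h m)

lemma pow_le_brf {c : ℝ} (hc : 0 ≤ c) {x : ℤ} {r : ℕ}
    (h : ∀ i : ℕ, i < r → c ≤ br (x - i)) : c ^ r ≤ brf x r := by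
  unfold brf
  calc c ^ r = ∏ _i ∈ Finset.range r, c := by
        rw [Finset.prod_const, Finset.card_range]
    _ ≤ ∏ i ∈ Finset.range r, br (x - i) :=
        Finset.prod_le_prod (fun _ _ => hc) (fun i hi => h i (Finset.mem_range.mp hi))

lemma brf_le_pow (m : ℤ) (r : ℕ) : brf m r ≤ (br m) ^ r := by
  unfold brf
  calc ∏ i ∈ Finset.range r, br (m - i)
      ≤ ∏ _i ∈ Finset.range r, br m :=
        Finset.prod_le_prod (fun _ _ => (br_pos _).le)
          (fun i _ => max_le_max (by push_cast; linarith [Int.ofNat_nonneg i]) le_rfl)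
    _ = (br m) ^ r := by rw [Finset.prod_const, Finset.card_range]

lemma brf_two (x : ℤ) : brf x 2 = br x * br (x - 1) := by
  unfold brf
  rw [Finset.prod_range_succ, Finset.prod_range_one]
  norm_num

lemma br_natCast {n : ℕ} (hn : 1 ≤ n) : br (n : ℤ) = (n : ℝ) := by
  unfold br
  rw [max_eq_left]
  · norm_num
  · exact_mod_cast hn

lemma sum_inv_brf_two_aux (n : ℕ) :
    ∑ p ∈ Finset.range (n + 1), (brf p 2)⁻¹ + (br n)⁻¹ ≤ 3 := by
  induction n with
  | zero =>
    rw [Finset.sum_range_one, brf_two]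
    norm_num [br]
  | succ n ih =>
    rw [Finset.sum_range_succ]
    rcases Nat.eq_zero_or_pos n with h | h
    · subst h
      rw [Finset.sum_range_one, brf_two, brf_two]
      norm_num [br]
    · have hn : (1 : ℝ) ≤ (n : ℝ) := by exact_mod_cast h
      have e1 : br (n : ℤ) = (n : ℝ) := br_natCast h
      have e2 : br ((n : ℕ) + 1 : ℤ) = (n : ℝ) + 1 := by
        have := br_natCast (n := n + 1) (by omega)
        push_cast at this ⊢
        linarith [this]
      have e3 : brf ((n : ℕ) + 1 : ℤ) 2 = ((n : ℝ) + 1) * n := by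
        rw [brf_two, e2]
        have : ((n : ℤ) + 1 - 1) = (n : ℤ) := by ring
        rw [this, e1]
      have key : (((n : ℝ) + 1) * n)⁻¹ + ((n : ℝ) + 1)⁻¹ = ((n : ℝ))⁻¹ := by
        field_simp
        ring
      push_cast
      push_cast at ih
      rw [e3, e2]
      rw [e1] at ih
      linarith [key, ih]

lemma sum_inv_brf_two (n : ℕ) :
    ∑ p ∈ Finset.range (n + 1), (brf p 2)⁻¹ ≤ 3 := by
  have h := sum_inv_brf_two_aux n
  have : 0 < (br n)⁻¹ := inv_pos.mpr (br_pos _)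
  linarith

lemma sum_inv_brf_two_rev (n : ℕ) :
    ∑ p ∈ Finset.range (n + 1), (brf ((n : ℤ) - p) 2)⁻¹ ≤ 3 := by
  have e : ∑ p ∈ Finset.range (n + 1), (brf ((n : ℤ) - p) 2)⁻¹
      = ∑ p ∈ Finset.range (n + 1), (brf p 2)⁻¹ := by
    rw [← Finset.sum_range_reflect (fun p => (brf ((n : ℤ) - p) 2)⁻¹) (n + 1)]
    apply Finset.sum_congr rfl
    intro j hj
    have hj' : j ≤ n := by
      have := Finset.mem_range.mp hj; omega
    congr 2
    push_cast [Nat.cast_sub hj']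
    ring
  rw [e]
  exact sum_inv_brf_two n

/-- for all integers `q ≥ r ≥ 2` and every `m ≥ 0`,
`∑_{p=0}^m [p]_q⁻¹ [m-p]_r⁻¹ ≤ 6 (2r)^r [m]_r⁻¹`. -/
theorem sum_inv_brf_convolution_le (q r : ℕ) (hr : 2 ≤ r) (hqr : r ≤ q) (m : ℕ) :
    ∑ p ∈ Finset.range (m + 1), (brf p q)⁻¹ * (brf ((m : ℤ) - p) r)⁻¹
      ≤ 6 * (2 * r) ^ r * (brf m r)⁻¹ := by
  have hr2 : (2 : ℝ) ≤ (r : ℝ) := by exact_mod_cast hr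
  have hC : (0 : ℝ) < (2 * (r : ℝ)) ^ r := by positivity
  have hB : (0 : ℝ) < (brf m r)⁻¹ := inv_pos.mpr (brf_pos _ _)
  by_cases hm : m < 2 * r
  · -- small case : LHS ≤ 3 ≤ 6 ≤ RHS
    have h1 : ∑ p ∈ Finset.range (m + 1), (brf p q)⁻¹ * (brf ((m : ℤ) - p) r)⁻¹
        ≤ ∑ p ∈ Finset.range (m + 1), (brf p 2)⁻¹ := by
      apply Finset.sum_le_sum
      intro p _
      calc (brf p q)⁻¹ * (brf ((m : ℤ) - p) r)⁻¹
          ≤ (brf p 2)⁻¹ * 1 :=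
            mul_le_mul (inv_brf_anti (le_trans hr hqr) _) (inv_brf_le_one _ _)
              (inv_pos.mpr (brf_pos _ _)).le (inv_pos.mpr (brf_pos _ _)).le
        _ = (brf p 2)⁻¹ := mul_one _
    have h2 := sum_inv_brf_two m
    have h3 : brf m r ≤ (2 * (r : ℝ)) ^ r := by
      calc brf m r ≤ (br m) ^ r := brf_le_pow m r
        _ ≤ (2 * (r : ℝ)) ^ r := by
            apply pow_le_pow_left₀ (br_pos _).le
            unfold br
            apply max_le
            · push_cast; exact_mod_cast (le_of_lt (by exact_mod_cast hm : ((m : ℝ)) < 2 * r))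
            · linarith
    have h4 : (1 : ℝ) ≤ (2 * (r : ℝ)) ^ r * (brf m r)⁻¹ := by
      have := mul_le_mul_of_nonneg_right h3 hB.le
      rwa [mul_inv_cancel₀ (brf_pos m r).ne'] at this
    push_cast
    nlinarith [h1, h2, h4]
  · push_neg at hm
    have hm1 : (2 * (r : ℝ)) ≤ (m : ℝ) := by exact_mod_cast hm
    have hmpos : (1 : ℝ) ≤ (m : ℝ) := by linarith
    set c : ℝ := (m : ℝ) / (2 * r) with hc_def
    have hc : 0 < c := by positivity
    set D : ℝ := (2 * (r : ℝ)) ^ r * (brf m r)⁻¹ with hD_def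
    have hD : 0 < D := by positivity
    -- key: any x with m/2 ≤ x has (brf x r)⁻¹ ≤ D
    have key : ∀ x : ℤ, (m : ℝ) / 2 ≤ (x : ℝ) → (brf x r)⁻¹ ≤ D := by
      intro x hx
      have hcr : c ^ r ≤ brf x r := by
        apply pow_le_brf hc.le
        intro i hi
        have hi' : (i : ℝ) ≤ (r : ℝ) - 1 := by
          have : (i : ℝ) + 1 ≤ r := by exact_mod_cast hi
          linarith
        have hfac : c ≤ (x : ℝ) - i := by
          rw [hc_def, div_le_iff₀ (by positivity)]
          nlinarith
        calc c ≤ (x : ℝ) - i := hfac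
          _ ≤ br (x - i) := by
              unfold br; push_cast; exact le_max_left _ _
      have h5 : (brf x r)⁻¹ ≤ (c ^ r)⁻¹ := inv_anti₀ (by positivity) hcr
      have h6 : (c ^ r)⁻¹ = (2 * (r : ℝ)) ^ r * ((m : ℝ) ^ r)⁻¹ := by
        rw [hc_def, div_pow, inv_div, div_eq_mul_inv]
      have h7 : ((m : ℝ) ^ r)⁻¹ ≤ (brf m r)⁻¹ := by
        apply inv_anti₀ (brf_pos _ _)
        calc brf m r ≤ (br m) ^ r := brf_le_pow m r
          _ = (m : ℝ) ^ r := by rw [br_natCast (by omega : 1 ≤ m)]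
      calc (brf x r)⁻¹ ≤ (c ^ r)⁻¹ := h5
        _ = (2 * (r : ℝ)) ^ r * ((m : ℝ) ^ r)⁻¹ := h6
        _ ≤ D := by rw [hD_def]; exact mul_le_mul_of_nonneg_left h7 hC.le
    set k := m / 2 with hk_def
    have hk1 : k + 1 ≤ m + 1 := by omega
    have hsplit : ∑ p ∈ Finset.range (m + 1), (brf p q)⁻¹ * (brf ((m : ℤ) - p) r)⁻¹
        = (∑ p ∈ Finset.range (k + 1), (brf p q)⁻¹ * (brf ((m : ℤ) - p) r)⁻¹)
          + ∑ p ∈ Finset.Ico (k + 1) (m + 1), (brf p q)⁻¹ * (brf ((m : ℤ) - p) r)⁻¹ := by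
      rw [Finset.range_eq_Ico, Finset.range_eq_Ico]
      exact (Finset.sum_Ico_consecutive (fun p : ℕ => (brf p q)⁻¹ * (brf ((m : ℤ) - p) r)⁻¹) (Nat.zero_le (k + 1)) hk1).symm
    -- head bound
    have head : ∑ p ∈ Finset.range (k + 1), (brf p q)⁻¹ * (brf ((m : ℤ) - p) r)⁻¹
        ≤ 3 * D := by
      calc ∑ p ∈ Finset.range (k + 1), (brf p q)⁻¹ * (brf ((m : ℤ) - p) r)⁻¹
          ≤ ∑ p ∈ Finset.range (k + 1), (brf p 2)⁻¹ * D := by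
            apply Finset.sum_le_sum
            intro p hp
            have hp' : p ≤ k := by have := Finset.mem_range.mp hp; omega
            apply mul_le_mul (inv_brf_anti (le_trans hr hqr) _)
            · apply key
              push_cast
              have : (p : ℝ) ≤ (m : ℝ) / 2 := by
                have h2k : (2 * k : ℕ) ≤ m := by omega
                have : (p : ℝ) ≤ k := by exact_mod_cast hp'
                have : ((2 * k : ℕ) : ℝ) ≤ m := by exact_mod_cast h2k
                push_cast at this
                linarith [(by exact_mod_cast hp' : (p:ℝ) ≤ (k:ℝ))]
              linarith
            · exact (inv_pos.mpr (brf_pos _ _)).le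
            · exact (inv_pos.mpr (brf_pos _ _)).le
        _ = (∑ p ∈ Finset.range (k + 1), (brf p 2)⁻¹) * D := by
            rw [Finset.sum_mul]
        _ ≤ 3 * D := mul_le_mul_of_nonneg_right (sum_inv_brf_two k) hD.le
    -- tail bound
    have tail : ∑ p ∈ Finset.Ico (k + 1) (m + 1), (brf p q)⁻¹ * (brf ((m : ℤ) - p) r)⁻¹
        ≤ 3 * D := by
      calc ∑ p ∈ Finset.Ico (k + 1) (m + 1), (brf p q)⁻¹ * (brf ((m : ℤ) - p) r)⁻¹
          ≤ ∑ p ∈ Finset.Ico (k + 1) (m + 1), D * (brf ((m : ℤ) - p) 2)⁻¹ := by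
            apply Finset.sum_le_sum
            intro p hp
            have hp' : k + 1 ≤ p := (Finset.mem_Ico.mp hp).1
            apply mul_le_mul
            · calc (brf p q)⁻¹ ≤ (brf p r)⁻¹ := inv_brf_anti hqr _
                _ ≤ D := by
                  apply key
                  push_cast
                  have h2k : m ≤ 2 * k + 1 := by omega
                  have : ((m : ℝ)) ≤ 2 * k + 1 := by exact_mod_cast h2k
                  have hpk : ((k : ℝ)) + 1 ≤ p := by exact_mod_cast hp'
                  linarith
            · exact inv_brf_anti hr _
            · exact (inv_pos.mpr (brf_pos _ _)).le
            · exact hD.le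
        _ = D * ∑ p ∈ Finset.Ico (k + 1) (m + 1), (brf ((m : ℤ) - p) 2)⁻¹ := by
            rw [Finset.mul_sum]
        _ ≤ D * ∑ p ∈ Finset.range (m + 1), (brf ((m : ℤ) - p) 2)⁻¹ := by
            apply mul_le_mul_of_nonneg_left _ hD.le
            apply Finset.sum_le_sum_of_subset_of_nonneg
            · rw [Finset.range_eq_Ico]
              exact Finset.Ico_subset_Ico (Nat.zero_le _) le_rfl
            · intro i _ _
              exact (inv_pos.mpr (brf_pos _ _)).le
        _ ≤ D * 3 := mul_le_mul_of_nonneg_left (sum_inv_brf_two_rev m) hD.le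
        _ = 3 * D := mul_comm _ _
    rw [hsplit]
    have : (6 : ℝ) * (2 * (r : ℝ)) ^ r * (brf m r)⁻¹ = 3 * D + 3 * D := by
      rw [hD_def]; ring
    push_cast
    push_cast at this
    linarith [head, tail]
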